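/- Suppose every bounded trajectory of the tiling billiard in a triangle tiling intersects each tile in at most one segment. Then every bounded trajectory is periodic. -/
import Mathlib


/-- Bounded implies periodic for tiling billiard trajectories in a triangle tiling:
model the billiard flow as an invertible deterministic step map f on the space S of states
(a state records the current tile together with the entry point and direction of the
segment), and let `tile : S → Tile` record the tile. If the trajectory of x is bounded
— it meets only finitely many tiles — and intersects each tile in at most one segment
(so the tile determines the state along the orbit), then the trajectory is periodic. -/
theorem bounded_trajectory_is_periodic
    {S Tile : Type*} (tile : S → Tile) (f : S ≃ S) (x : S)
    (hbounded : {T : Tile | ∃ n : ℤ, tile ((f ^ n) x) = T}.Finite)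
    (honeseg : ∀ m n : ℤ, tile ((f ^ m) x) = tile ((f ^ n) x) → (f ^ m) x = (f ^ n) x) :
    ∃ p : ℕ, 0 < p ∧ (f ^ (p : ℤ)) x = x := by
  have hrange : (Set.range fun n : ℤ => tile ((f ^ n) x)).Finite :=
    hbounded.subset (by rintro _ ⟨n, rfl⟩; exact ⟨n, rfl⟩)
  have hni : ¬ Function.Injective (fun n : ℤ => tile ((f ^ n) x)) := fun h =>
    (Set.infinite_range_of_injective h) hrange
  rw [Function.not_injective_iff] at hni
  obtain ⟨m, n, heq, hne⟩ := hni
  have hst : (f ^ m) x = (f ^ n) x := honeseg m n heq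
  have key : ∀ a b : ℤ, a < b → (f ^ a) x = (f ^ b) x →
      ∃ p : ℕ, 0 < p ∧ (f ^ (p : ℤ)) x = x := by
    intro a b hab h
    refine ⟨(b - a).toNat, by omega, ?_⟩
    have hc : ((b - a).toNat : ℤ) = b - a := Int.toNat_of_nonneg (by omega)
    rw [hc]
    rw [sub_eq_neg_add, zpow_add, Equiv.Perm.mul_apply, ← h, ← Equiv.Perm.mul_apply,
      ← zpow_add, neg_add_cancel, zpow_zero, Equiv.Perm.one_apply]
  rcases lt_or_gt_of_ne hne with h | h
  · exact key m n h hst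
  · exact key n m h hst.symm
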